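/- Let X be a complex d×n equiangular tight frame with d ≥ 2 and n > d, and let α = √((n − d)/(d(n − 1))). Then there exists a matrix Y ∈ ℂ^{(d−1)×(n−1)} such that Y is a (d−1)×(n−1) unit norm tight frame, Y𝟙 = 0 (the all-ones vector is in the kernel of Y), and every off-diagonal entry z of Y*Y satisfies |α² + (1 − α²)z| = α. -/

import Mathlib

open Matrix

lemma sum_fin_split {M : Type*} [AddCommMonoid M] {m : ℕ} (hm : 0 < m) (g : Fin m → M) :
    ∑ i, g i = g ⟨0, hm⟩ + ∑ i : Fin (m-1), g ⟨i.1+1, by omega⟩ := by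
  have h : m - 1 + 1 = m := by omega
  rw [← Equiv.sum_comp (finCongr h) g, Fin.sum_univ_succ]
  rfl

lemma conj_mul_self (z : ℂ) : (starRingEnd ℂ) z * z = ((‖z‖^2 : ℝ) : ℂ) := by
  rw [mul_comm, Complex.mul_conj, Complex.normSq_eq_norm_sq]

lemma mul_conj_self (z : ℂ) : z * (starRingEnd ℂ) z = ((‖z‖^2 : ℝ) : ℂ) := by
  rw [Complex.mul_conj, Complex.normSq_eq_norm_sq]


/-- `X` is a complex `d × n` equiangular tight frame: there exist `α, β > 0` such that
every diagonal entry of `XᴴX` equals `1`, the absolute value of every off-diagonal entry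
of `XᴴX` equals `α`, and `XXᴴ = β I`. -/
def IsETF {d n : ℕ} (X : Matrix (Fin d) (Fin n) ℂ) : Prop :=
  ∃ α β : ℝ, 0 < α ∧ 0 < β ∧
    (∀ j, (Xᴴ * X) j j = 1) ∧
    (∀ j k, j ≠ k → ‖(Xᴴ * X) j k‖ = α) ∧
    X * Xᴴ = (β : ℂ) • (1 : Matrix (Fin d) (Fin d) ℂ)

/-- `Y` is a complex `d × n` unit norm tight frame: its columns have unit norm and
`YYᴴ = (n/d) I`. -/
def IsUNTF {d n : ℕ} (Y : Matrix (Fin d) (Fin n) ℂ) : Prop :=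
  (∀ j, ∑ i, ‖Y i j‖ ^ 2 = 1) ∧
    Y * Yᴴ = (((n : ℝ) / d : ℝ) : ℂ) • (1 : Matrix (Fin d) (Fin d) ℂ)

/-- Let `X` be a complex `d × n` equiangular tight frame with `d ≥ 2` and `n > d`, and let
`α = √((n − d)/(d(n − 1)))`. Then there exists `Y ∈ ℂ^{(d−1)×(n−1)}` which is a
`(d−1) × (n−1)` unit norm tight frame with `Y𝟙 = 0`, and every off-diagonal entry `z` of
`YᴴY` satisfies `|α² + (1 − α²)z| = α`. -/
theorem etf_reduction {d n : ℕ} (hd : 2 ≤ d) (hn : d < n)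
    (X : Matrix (Fin d) (Fin n) ℂ) (hX : IsETF X)
    (α : ℝ) (hα : α = Real.sqrt (((n : ℝ) - d) / (d * ((n : ℝ) - 1)))) :
    ∃ Y : Matrix (Fin (d - 1)) (Fin (n - 1)) ℂ,
      IsUNTF Y ∧
      Y.mulVec (fun _ => 1) = 0 ∧
      ∀ j k, j ≠ k →
        ‖((α : ℂ) ^ 2 + (1 - (α : ℂ) ^ 2) * (Yᴴ * Y) j k)‖ = α := by
  obtain ⟨α₀, β, hα₀, hβpos, hdiag, hoff, hframe⟩ := hX
  haveI : NeZero d := ⟨by omega⟩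
  haveI : NeZero n := ⟨by omega⟩
  have hd1 : (1:ℝ) < d := by exact_mod_cast by omega
  have hn1 : (1:ℝ) < n := by exact_mod_cast by omega
  have hdn : (d:ℝ) < n := by exact_mod_cast hn
  have hd0 : (0:ℝ) < d := by linarith
  set G : Matrix (Fin n) (Fin n) ℂ := Xᴴ * X with hG
  have hGherm : ∀ j k, G k j = (starRingEnd ℂ) (G j k) := by
    intro j k
    have : Gᴴ = G := by rw [hG, conjTranspose_mul, conjTranspose_conjTranspose]
    conv_lhs => rw [← this]
    simp [conjTranspose_apply]
  -- Step 1 : β = n / d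
  have hβ : β = n / d := by
    have t := Matrix.trace_mul_comm X Xᴴ
    rw [hframe] at t
    have tl : Matrix.trace ((β:ℂ) • (1 : Matrix (Fin d) (Fin d) ℂ)) = (β:ℂ) * d := by
      simp [Matrix.trace_smul, Matrix.trace_one, mul_comm]
    have tr : Matrix.trace (Xᴴ * X) = (n:ℂ) := by
      rw [Matrix.trace]
      simp only [Matrix.diag_apply]
      rw [Finset.sum_congr rfl (fun j _ => hdiag j)]
      simp
    rw [tl, tr] at t
    have : β * d = n := by exact_mod_cast t
    field_simp
    linarith
  -- Step 2 : α₀ = α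
  have htr2 : Matrix.trace (G * G) = ((β^2 * d : ℝ) : ℂ) := by
    calc Matrix.trace (G * G) = Matrix.trace (Xᴴ * (X * (Xᴴ * X))) := by
          rw [hG, Matrix.mul_assoc]
      _ = Matrix.trace ((X * (Xᴴ * X)) * Xᴴ) := by rw [Matrix.trace_mul_comm]
      _ = Matrix.trace ((X * Xᴴ) * (X * Xᴴ)) := by simp only [Matrix.mul_assoc]
      _ = Matrix.trace (((β:ℂ) • (1 : Matrix (Fin d) (Fin d) ℂ)) *
            ((β:ℂ) • (1 : Matrix (Fin d) (Fin d) ℂ))) := by rw [hframe]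
      _ = ((β^2 * d : ℝ) : ℂ) := by
          simp [Matrix.smul_mul, Matrix.mul_smul, Matrix.trace_smul, Matrix.trace_one]
          ring
  have hterm : ∀ j k : Fin n, G j k * G k j = (((‖G j k‖)^2 : ℝ) : ℂ) := by
    intro j k
    rw [hGherm j k, mul_conj_self]
  have htr2' : Matrix.trace (G * G) = (((n : ℝ) * (1 + ((n:ℝ)-1) * α₀^2) : ℝ) : ℂ) := by
    have hrow : ∀ j : Fin n, ∑ k, G j k * G k j = ((1 + ((n:ℝ)-1) * α₀^2 : ℝ):ℂ) := by
      intro j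
      rw [← Finset.add_sum_erase Finset.univ _ (Finset.mem_univ j)]
      have hrest : ∀ k ∈ Finset.univ.erase j, G j k * G k j = ((α₀^2 : ℝ):ℂ) := by
        intro k hk
        rw [hterm j k, hoff j k (Ne.symm (Finset.ne_of_mem_erase hk))]
      rw [Finset.sum_congr rfl hrest, Finset.sum_const,
        Finset.card_erase_of_mem (Finset.mem_univ j), Finset.card_univ, Fintype.card_fin,
        hterm j j, hdiag j]
      have hcast : ((n-1:ℕ):ℂ) = (n:ℂ) - 1 := by
        rw [Nat.cast_sub (by omega : 1 ≤ n)]; simp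
      simp only [nsmul_eq_mul, hcast, norm_one]
      push_cast
      ring
    calc Matrix.trace (G * G) = ∑ j, ∑ k, G j k * G k j := by
          simp [Matrix.trace, Matrix.diag, Matrix.mul_apply]
      _ = ∑ j : Fin n, ((1 + ((n:ℝ)-1) * α₀^2 : ℝ):ℂ) := Finset.sum_congr rfl (fun j _ => hrow j)
      _ = (((n : ℝ) * (1 + ((n:ℝ)-1) * α₀^2) : ℝ) : ℂ) := by
          rw [Finset.sum_const, Finset.card_univ, Fintype.card_fin, nsmul_eq_mul]
          push_cast
          ring
  have hα₀sq : α₀^2 = ((n:ℝ) - d) / (d * ((n:ℝ) - 1)) := by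
    have h2 : β^2 * d = (n:ℝ) * (1 + ((n:ℝ)-1) * α₀^2) := by
      have := htr2.symm.trans htr2'
      exact_mod_cast this
    rw [hβ] at h2
    have hn1' : (n:ℝ) - 1 ≠ 0 := by linarith
    have hd0' : (d:ℝ) ≠ 0 := by linarith
    have hn0' : (n:ℝ) ≠ 0 := by linarith
    field_simp at h2 ⊢
    have hnd : (n:ℝ) * d ≠ 0 := by positivity
    have key : α₀^2*((d:ℝ)*((n:ℝ)-1))*((n:ℝ)*d) = (((n:ℝ)-d))*((n:ℝ)*d) := by
      linear_combination (-(n:ℝ)*d) * h2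
    exact mul_right_cancel₀ hnd (by linear_combination key)
  have hαα : α₀ = α := by
    rw [hα, ← hα₀sq, Real.sqrt_sq hα₀.le]
  subst hαα
  -- basic positivity facts
  have hα2lt : α₀^2 < 1 := by
    rw [hα₀sq]
    rw [div_lt_one (by nlinarith)]
    nlinarith
  have h1α : (0:ℝ) < 1 - α₀^2 := by linarith
  set s : ℝ := Real.sqrt (1 - α₀^2) with hs
  have hspos : 0 < s := Real.sqrt_pos.mpr h1α
  have hs2 : s^2 = 1 - α₀^2 := Real.sq_sqrt h1α.le
  -- the orthonormal basis
  set x₁ : EuclideanSpace ℂ (Fin d) := WithLp.toLp 2 (fun i => X i 0) with hx₁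
  have hx₁norm : (inner ℂ x₁ x₁ : ℂ) = 1 := by
    have h00 := hdiag 0
    simp only [hG, Matrix.mul_apply, conjTranspose_apply, RCLike.star_def] at h00
    simp only [PiLp.inner_apply, RCLike.inner_apply, hx₁, WithLp.ofLp_toLp]
    rw [← h00]; exact Finset.sum_congr rfl (fun _ _ => mul_comm _ _)
  have hortho : Orthonormal ℂ (({0} : Set (Fin d)).restrict (fun _ => x₁)) := by
    rw [orthonormal_iff_ite]
    rintro ⟨i, hi⟩ ⟨j, hj⟩
    simp only [Set.mem_singleton_iff] at hi hj
    subst hi; subst hj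
    rw [if_pos rfl]; exact hx₁norm
  obtain ⟨b, hb⟩ := hortho.exists_orthonormalBasis_extension_of_card_eq
    (by simp) 
  have hb0 : b 0 = x₁ := hb 0 rfl
  -- phases
  have hG0 : ∀ k : Fin n, k ≠ 0 → G 0 k ≠ 0 := by
    intro k hk h0
    have := hoff 0 k (Ne.symm hk)
    rw [h0] at this
    simp at this
    linarith
  set c : Fin n → ℂ := fun k => if k = 0 then 1 else (α₀:ℂ) / G 0 k with hc
  have hc0 : c 0 = 1 := by simp [hc]
  have hcabs : ∀ k, ‖c k‖ = 1 := by
    intro k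
    by_cases hk : k = 0
    · simp [hc, hk]
    · simp only [hc, if_neg hk]
      rw [norm_div, Complex.norm_real, Real.norm_eq_abs, hoff 0 k (Ne.symm hk), abs_of_pos hα₀,
        div_self (ne_of_gt hα₀)]
  have hcconj : ∀ k, c k * (starRingEnd ℂ) (c k) = 1 := by
    intro k
    rw [mul_conj_self]
    rw [hcabs]
    simp
  have hcG : ∀ k : Fin n, k ≠ 0 → c k * G 0 k = (α₀:ℂ) := by
    intro k hk
    simp only [hc, if_neg hk]
    exact div_mul_cancel₀ _ (hG0 k hk)
  -- matrices
  set M : Matrix (Fin d) (Fin d) ℂ := Matrix.of (fun i j => (starRingEnd ℂ) (b i j)) with hM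
  set X' : Matrix (Fin d) (Fin n) ℂ := Matrix.of (fun p k => c k * X p k) with hX'
  set Z : Matrix (Fin d) (Fin n) ℂ := M * X' with hZ
  have hinner : ∀ i i' : Fin d, (inner ℂ (b i) (b i') : ℂ) = if i = i' then 1 else 0 :=
    orthonormal_iff_ite.mp b.orthonormal
  have hMM : M * Mᴴ = 1 := by
    ext i i'
    have := hinner i i'
    simp only [PiLp.inner_apply, RCLike.inner_apply] at this
    simp only [Matrix.mul_apply, Matrix.conjTranspose_apply, hM, Matrix.of_apply,
      RCLike.star_def, Complex.conj_conj, Matrix.one_apply]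
    rw [← this]; exact Finset.sum_congr rfl (fun _ _ => mul_comm _ _)
  have hMtM : Mᴴ * M = 1 := mul_eq_one_comm.mp hMM
  have hZtZ : ∀ j k, (Zᴴ * Z) j k = (starRingEnd ℂ) (c j) * c k * G j k := by
    have hZtZ' : Zᴴ * Z = X'ᴴ * X' := by
      rw [hZ, Matrix.conjTranspose_mul, Matrix.mul_assoc, ← Matrix.mul_assoc Mᴴ M X',
        hMtM, Matrix.one_mul]
    intro j k
    rw [hZtZ', hG]
    simp only [Matrix.mul_apply, Matrix.conjTranspose_apply, hX', Matrix.of_apply,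
      RCLike.star_def, _root_.map_mul]
    rw [Finset.mul_sum]
    exact Finset.sum_congr rfl (fun p _ => by ring)
  have hZZt : Z * Zᴴ = (β:ℂ) • 1 := by
    have hX'X' : X' * X'ᴴ = X * Xᴴ := by
      ext p p'
      simp only [Matrix.mul_apply, Matrix.conjTranspose_apply, hX', Matrix.of_apply,
        RCLike.star_def, _root_.map_mul]
      refine Finset.sum_congr rfl (fun k _ => ?_)
      have := hcconj k
      calc c k * X p k * ((starRingEnd ℂ) (c k) * (starRingEnd ℂ) (X p' k))
          = (c k * (starRingEnd ℂ) (c k)) * (X p k * (starRingEnd ℂ) (X p' k)) := by ring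
        _ = X p k * (starRingEnd ℂ) (X p' k) := by rw [this, one_mul]
    rw [hZ, Matrix.conjTranspose_mul, Matrix.mul_assoc, ← Matrix.mul_assoc X' X'ᴴ Mᴴ,
      hX'X', hframe, Matrix.smul_mul, Matrix.one_mul, Matrix.mul_smul, hMM]
  have hZcol0 : ∀ i, Z i 0 = if i = 0 then 1 else 0 := by
    intro i
    have hi := hinner i 0
    simp only [PiLp.inner_apply, RCLike.inner_apply, hb0] at hi
    rw [← hi]
    simp only [hZ, Matrix.mul_apply, hM, hX', Matrix.of_apply, hc0, hx₁]
    exact Finset.sum_congr rfl (fun p _ => by ring)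
  have hZrow0 : ∀ k, Z 0 k = c k * G 0 k := by
    intro k
    simp only [hZ, Matrix.mul_apply, hM, hX', Matrix.of_apply, hb0, hx₁, hG,
      Matrix.conjTranspose_apply, RCLike.star_def, Finset.mul_sum]
    exact Finset.sum_congr rfl (fun p _ => by ring)
  have hZrow0' : ∀ k : Fin n, k ≠ 0 → Z 0 k = (α₀:ℂ) := by
    intro k hk
    rw [hZrow0 k, hcG k hk]
  -- index embeddings
  have hd0n : 0 < d := by omega
  have hn0n : 0 < n := by omega
  set e : Fin (d-1) → Fin d := fun i => ⟨i.1+1, by omega⟩ with he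
  set f : Fin (n-1) → Fin n := fun j => ⟨j.1+1, by omega⟩ with hf
  have hzd : (⟨0, hd0n⟩ : Fin d) = 0 := by
    ext
    simp
  have hzn : (⟨0, hn0n⟩ : Fin n) = 0 := by
    ext
    simp
  have he0 : ∀ i, e i ≠ 0 := by
    intro i h
    have := congrArg Fin.val h
    simp [he] at this
  have hf0 : ∀ j, f j ≠ 0 := by
    intro j h
    have := congrArg Fin.val h
    simp [hf] at this
  have heinj : ∀ i i' : Fin (d-1), (e i = e i') ↔ i = i' := by
    intro i i'
    constructor
    · intro h
      have := congrArg Fin.val h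
      simp only [he] at this
      exact Fin.ext (by omega)
    · intro h; rw [h]
  have hfinj : ∀ j k : Fin (n-1), j ≠ k → f j ≠ f k := by
    intro j k hjk h
    have := congrArg Fin.val h
    simp only [hf] at this
    exact hjk (Fin.ext (by omega))
  set Y : Matrix (Fin (d-1)) (Fin (n-1)) ℂ :=
    Matrix.of (fun i j => ((s:ℂ))⁻¹ * Z (e i) (f j)) with hY
  have hs0 : (s:ℂ) ≠ 0 := by
    exact_mod_cast ne_of_gt hspos
  have hs20 : ((s:ℂ))^2 ≠ 0 := pow_ne_zero 2 hs0
  have hrowZZ : ∀ i i' : Fin d,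
      ∑ k : Fin n, Z i k * (starRingEnd ℂ) (Z i' k) = (β:ℂ) * (if i = i' then 1 else 0) := by
    intro i i'
    have h := congrFun (congrFun hZZt i) i'
    simp only [Matrix.mul_apply, Matrix.conjTranspose_apply, RCLike.star_def,
      Matrix.smul_apply, Matrix.one_apply, smul_eq_mul] at h
    exact h
  have hd1n : (0:ℝ) < (d:ℝ) - 1 := by linarith
  have hn1n : (0:ℝ) < (n:ℝ) - 1 := by linarith
  have hcastd : (((d-1:ℕ)):ℝ) = (d:ℝ) - 1 := by
    rw [Nat.cast_sub (by omega : 1 ≤ d)]; simp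
  have hcastn : (((n-1:ℕ)):ℝ) = (n:ℝ) - 1 := by
    rw [Nat.cast_sub (by omega : 1 ≤ n)]; simp
  have hrealeq : s⁻¹ * s⁻¹ * β = (((n-1:ℕ):ℝ) / ((d-1:ℕ):ℝ)) := by
    have h5 : 1 - α₀^2 = (n:ℝ)*((d:ℝ)-1)/((d:ℝ)*((n:ℝ)-1)) := by
      rw [hα₀sq]
      field_simp
      ring
    have hss : s⁻¹ * s⁻¹ = (1 - α₀^2)⁻¹ := by rw [← mul_inv, ← sq, hs2]
    have hdd : (d:ℝ) ≠ 0 := by linarith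
    have hnn : (n:ℝ) ≠ 0 := by linarith
    have hd1' : (d:ℝ) - 1 ≠ 0 := by linarith
    have hn1' : (n:ℝ) - 1 ≠ 0 := by linarith
    rw [hss, h5, hcastd, hcastn, hβ]
    rw [show ((n:ℝ)*((d:ℝ)-1)/((d:ℝ)*((n:ℝ)-1)))⁻¹ = ((d:ℝ)*((n:ℝ)-1))/((n:ℝ)*((d:ℝ)-1)) by
      rw [inv_div]]
    field_simp
  refine ⟨Y, ⟨?_, ?_⟩, ?_, ?_⟩
  · -- unit norm columns
    intro j
    have h2' : (Zᴴ * Z) (f j) (f j) = 1 := by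
      rw [hZtZ, hdiag, mul_one, mul_comm, hcconj]
    have h3 : ((∑ i : Fin d, ‖Z i (f j)‖^2 : ℝ) : ℂ) = ((1:ℝ):ℂ) := by
      calc ((∑ i : Fin d, ‖Z i (f j)‖^2 : ℝ) : ℂ)
          = ∑ i : Fin d, ((‖Z i (f j)‖^2 : ℝ):ℂ) := by push_cast; rfl
        _ = ∑ i : Fin d, (starRingEnd ℂ) (Z i (f j)) * Z i (f j) :=
            Finset.sum_congr rfl (fun i _ => (conj_mul_self _).symm)
        _ = (Zᴴ * Z) (f j) (f j) := by
            simp [Matrix.mul_apply, Matrix.conjTranspose_apply, RCLike.star_def]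
        _ = ((1:ℝ):ℂ) := by rw [h2']; simp
    have h1 : ∑ i : Fin d, ‖Z i (f j)‖^2 = 1 := by exact_mod_cast h3
    rw [sum_fin_split hd0n (fun i => ‖Z i (f j)‖^2), hzd, hZrow0' (f j) (hf0 j)] at h1
    have hZ0 : ‖((α₀:ℝ):ℂ)‖^2 = α₀^2 := by
      rw [Complex.norm_real, Real.norm_eq_abs, abs_of_pos hα₀]
    rw [hZ0] at h1
    have hsum : ∑ i : Fin (d-1), ‖Z (e i) (f j)‖^2 = s^2 := by rw [hs2]; linarith
    calc ∑ i, ‖Y i j‖^2 = ∑ i : Fin (d-1), (s⁻¹)^2 * ‖Z (e i) (f j)‖^2 := by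
          refine Finset.sum_congr rfl (fun i _ => ?_)
          simp [hY, norm_mul, norm_inv, Complex.norm_real,
            abs_of_pos hspos, mul_pow]
      _ = (s⁻¹)^2 * ∑ i : Fin (d-1), ‖Z (e i) (f j)‖^2 := by rw [Finset.mul_sum]
      _ = 1 := by
          rw [hsum]
          field_simp
  · -- tightness
    ext i i'
    have hblock : ∑ j : Fin (n-1), Z (e i) (f j) * (starRingEnd ℂ) (Z (e i') (f j))
        = (β:ℂ) * (if i = i' then 1 else 0) := by
      have hrow := hrowZZ (e i) (e i')
      rw [sum_fin_split hn0n (fun k => Z (e i) k * (starRingEnd ℂ) (Z (e i') k)), hzn,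
        hZcol0 (e i), if_neg (he0 i), zero_mul, zero_add] at hrow
      rw [hrow]
      by_cases h : i = i'
      · subst h
        simp
      · rw [if_neg h, if_neg (fun hh => h ((heinj i i').mp hh))]
    have hscalar : ((s:ℂ))⁻¹ * ((s:ℂ))⁻¹ * (β:ℂ) = ((((n-1:ℕ):ℝ) / ((d-1:ℕ):ℝ) : ℝ) : ℂ) := by
      rw [show ((s:ℂ))⁻¹ = (((s⁻¹ : ℝ)):ℂ) by push_cast; rfl]
      rw [show ((β:ℂ)) = (((β : ℝ)):ℂ) by rfl]
      push_cast [← hrealeq]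
      ring
    calc (Y * Yᴴ) i i'
        = ((s:ℂ)⁻¹ * (s:ℂ)⁻¹) * ∑ j : Fin (n-1), Z (e i) (f j) * (starRingEnd ℂ) (Z (e i') (f j)) := by
          simp only [Matrix.mul_apply, hY, Matrix.of_apply, Matrix.conjTranspose_apply,
            RCLike.star_def, _root_.map_mul, map_inv₀, Complex.conj_ofReal, Finset.mul_sum]
          exact Finset.sum_congr rfl (fun j _ => by ring)
      _ = ((s:ℂ)⁻¹ * (s:ℂ)⁻¹ * (β:ℂ)) * (if i = i' then 1 else 0) := by rw [hblock]; ring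
      _ = (((((n-1:ℕ):ℝ) / ((d-1:ℕ):ℝ) : ℝ) : ℂ) • (1 : Matrix (Fin (d-1)) (Fin (d-1)) ℂ)) i i' := by
          rw [hscalar]
          simp [Matrix.smul_apply, Matrix.one_apply, smul_eq_mul]
  · -- all ones in kernel
    funext i
    have hrow := hrowZZ (e i) 0
    rw [if_neg (he0 i), mul_zero] at hrow
    rw [sum_fin_split hn0n (fun k => Z (e i) k * (starRingEnd ℂ) (Z 0 k)), hzn,
      hZcol0 (e i), if_neg (he0 i), zero_mul, zero_add] at hrow
    have hrest : ∀ j : Fin (n-1),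
        Z (e i) (f j) * (starRingEnd ℂ) (Z 0 (f j)) = Z (e i) (f j) * (α₀:ℂ) := by
      intro j
      rw [hZrow0' (f j) (hf0 j), Complex.conj_ofReal]
    rw [Finset.sum_congr rfl (fun j _ => hrest j), ← Finset.sum_mul] at hrow
    have hα₀C : ((α₀:ℝ):ℂ) ≠ 0 := by
      exact_mod_cast ne_of_gt hα₀
    have hzero : ∑ j : Fin (n-1), Z (e i) (f j) = 0 :=
      (mul_eq_zero.mp hrow).resolve_right hα₀C
    show ∑ j : Fin (n-1), Y i j * 1 = 0
    simp only [hY, Matrix.of_apply, mul_one]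
    rw [← Finset.mul_sum, hzero, mul_zero]
  · -- off-diagonal condition
    intro j k hjk
    have hW : ‖(Zᴴ * Z) (f j) (f k)‖ = α₀ := by
      rw [hZtZ, norm_mul, norm_mul, Complex.norm_conj, hcabs, hcabs,
        hoff (f j) (f k) (hfinj j k hjk), one_mul, one_mul]
    have hsplit := sum_fin_split hd0n (fun i : Fin d => (starRingEnd ℂ) (Z i (f j)) * Z i (f k))
    rw [hzd, hZrow0' (f j) (hf0 j), hZrow0' (f k) (hf0 k), Complex.conj_ofReal] at hsplit
    have hfull : ∑ i : Fin d, (starRingEnd ℂ) (Z i (f j)) * Z i (f k) = (Zᴴ * Z) (f j) (f k) := by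
      simp [Matrix.mul_apply, Matrix.conjTranspose_apply, RCLike.star_def]
    rw [hfull] at hsplit
    have hYtY : (Yᴴ * Y) j k
        = (((s:ℂ))^2)⁻¹ * ((Zᴴ * Z) (f j) (f k) - (α₀:ℂ)^2) := by
      calc (Yᴴ * Y) j k
          = ((s:ℂ)⁻¹ * (s:ℂ)⁻¹) * ∑ i : Fin (d-1), (starRingEnd ℂ) (Z (e i) (f j)) * Z (e i) (f k) := by
            simp only [Matrix.mul_apply, hY, Matrix.of_apply, Matrix.conjTranspose_apply,
              RCLike.star_def, _root_.map_mul, map_inv₀, Complex.conj_ofReal, Finset.mul_sum]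
            exact Finset.sum_congr rfl (fun i _ => by ring)
        _ = (((s:ℂ))^2)⁻¹ * ((Zᴴ * Z) (f j) (f k) - (α₀:ℂ)^2) := by
            rw [← mul_inv, ← sq]
            congr 1
            have hthis : ∑ i : Fin (d-1), (starRingEnd ℂ) (Z (e i) (f j)) * Z (e i) (f k)
                = (Zᴴ * Z) (f j) (f k) - (α₀:ℂ) * (α₀:ℂ) := eq_sub_of_add_eq' hsplit.symm
            rw [hthis]
            ring
    have hsq : (1 - ((α₀:ℝ):ℂ)^2) = ((s:ℂ))^2 := by
      rw [show ((s:ℂ))^2 = (((s^2 : ℝ)):ℂ) by push_cast; rfl, hs2]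
      push_cast
      ring
    rw [hYtY, hsq]
    have : ((s:ℂ))^2 * ((((s:ℂ))^2)⁻¹ * ((Zᴴ * Z) (f j) (f k) - (α₀:ℂ)^2))
        = (Zᴴ * Z) (f j) (f k) - (α₀:ℂ)^2 := by
      rw [← mul_assoc, mul_inv_cancel₀ hs20, one_mul]
    rw [this, add_sub_cancel]
    exact hW
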